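/- If an enumerable set U of tree-like multisets over F is mergeable, then its relaxed version U° = {t° : t ∈ U} is finite. -/

import Mathlib

namespace CFDPaper

noncomputable section

attribute [local instance] Classical.decEq
attribute [local instance] Classical.propDecidable

/-- Depth-indexed hereditary finite multisets: `HMd A n` models the class `M_{n+1}(A)`
of the cumulative hierarchy of finite multisets over the urelements `A`. -/
@[reducible] def HMd (A : Type) : ℕ → Type
  | 0 => Multiset A
  | n + 1 => Multiset (A ⊕ HMd A n)

variable {A B F : Type}

instance instAddHMd (A : Type) (n : ℕ) : Add (HMd A n) :=
  match n with
  | 0 => inferInstanceAs (Add (Multiset A))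
  | n + 1 => inferInstanceAs (Add (Multiset (A ⊕ HMd A n)))

/-- The canonical inclusion `M_{n+1}(A) ⊆ M_{n+2}(A)`. -/
def HMd.up : ∀ n : ℕ, HMd A n → HMd A (n + 1)
  | 0, m => ((m : Multiset A).map (Sum.inl : A → A ⊕ HMd A 0) : Multiset (A ⊕ HMd A 0))
  | n + 1, m => ((m : Multiset (A ⊕ HMd A n)).map (Sum.map id (HMd.up n)) :
      Multiset (A ⊕ HMd A (n + 1)))

/-- Iterated inclusion along `k ≤ n`. -/
def HMd.liftLe {k n : ℕ} (h : k ≤ n) (m : HMd A k) : HMd A n :=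
  Nat.leRecOn h (fun {i} x => HMd.up i x) m

/-- `m` (living at some level of the hierarchy) already appears at level `r`. -/
def comesFrom (r : ℕ) (m : Σ n, HMd A n) : Prop :=
  ∃ (h : r ≤ m.1) (x : HMd A r), HMd.liftLe h x = m.2

/-- The rank of a hereditary multiset: least level of the hierarchy where it occurs
(`rank m = r` corresponds to paper-rank `r + 1`). -/
def rank (m : Σ n, HMd A n) : ℕ := sInf {r | comesFrom r m}

/-- Equality of hereditary multisets living at different levels, via lifting. -/
def hmEq {k n : ℕ} (x : HMd A k) (y : HMd A n) : Prop :=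
  HMd.liftLe (le_max_left k n) x = HMd.liftLe (le_max_right k n) y

/-- Membership of a multiset in the domain (support) of a higher-level multiset. -/
def HMd.Memb {n : ℕ} (x : HMd A n) (m : HMd A (n + 1)) : Prop :=
  Sum.inr x ∈ (m : Multiset (A ⊕ HMd A n))

/-- The flattening function: flat multiplicity of each urelement. -/
def HMd.flat : ∀ {n : ℕ}, HMd A n → Multiset A
  | 0, m => (m : Multiset A)
  | n + 1, m => (m : Multiset (A ⊕ HMd A n)).bind fun e =>
      match e with
      | Sum.inl a => {a}
      | Sum.inr x => HMd.flat (n := n) x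

/-- Top-level multiplicity of an urelement. -/
def HMd.acount : ∀ {n : ℕ}, F → HMd F n → ℕ
  | 0, f, m => (m : Multiset F).count f
  | _ + 1, f, m => (m : Multiset _).count (Sum.inl f)

/-- The multiset-ingredient relation (transitive closure of domain membership). -/
inductive Ingr (A : Type) : ∀ {k n : ℕ}, HMd A k → HMd A n → Prop
  | mem {n : ℕ} {x : HMd A n} {m : HMd A (n + 1)} : x.Memb m → Ingr A x m
  | tail {k n : ℕ} {x : HMd A k} {y : HMd A n} {m : HMd A (n + 1)} :
      Ingr A x y → y.Memb m → Ingr A x m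

/-- Disjointness of flattened domains. -/
def FDisj {k n : ℕ} (x : HMd A k) (y : HMd A n) : Prop :=
  ∀ a, a ∈ x.flat → a ∉ y.flat

/-- The singleton multiset `⌈f⌉` at each level. -/
def HMd.single : ∀ n : ℕ, A → HMd A n
  | 0, f => ({f} : Multiset A)
  | _ + 1, f => ({Sum.inl f} : Multiset _)

/-- `⌈xᶜ⌉` : the multiset containing `x` with multiplicity `c`. -/
def HMd.rep {n : ℕ} (c : ℕ) (x : HMd A n) : HMd A (n + 1) :=
  (Multiset.replicate c (Sum.inr x) : Multiset (A ⊕ HMd A n))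

/-- `⌈t₁^{n₁}, …, t_k^{n_k}⌉` built from a list of tree-multiplicity pairs. -/
def HMd.ofList {n : ℕ} (l : List (HMd A n × ℕ)) : HMd A (n + 1) :=
  ((l.map fun p => Multiset.replicate p.2 (Sum.inr p.1 : A ⊕ HMd A n)).sum :
    Multiset (A ⊕ HMd A n))

/-- A "group" multiset: one whose domain contains no urelements. -/
def HMd.NoAtoms {n : ℕ} (g : HMd A (n + 1)) : Prop :=
  ∀ a : A, Sum.inl a ∉ (g : Multiset (A ⊕ HMd A n))

/-- Tree-like multisets over `F` (Definition: singleton, solitary-extension,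
group-extension; closed under the cumulative inclusions). -/
inductive TreeLike (F : Type) : ∀ n : ℕ, HMd F n → Prop
  | sing (n : ℕ) (f : F) : TreeLike F n (HMd.single n f)
  | up {n : ℕ} {t : HMd F n} : TreeLike F n t → TreeLike F (n + 1) (HMd.up n t)
  | sol {n : ℕ} {t₁ : HMd F (n + 1)} {t₂ : HMd F n} (c : ℕ) :
      TreeLike F (n + 1) t₁ → TreeLike F n t₂ → FDisj t₁ t₂ →
      TreeLike F (n + 1) (t₁ + HMd.rep c t₂)
  | grp {n : ℕ} {t : HMd F (n + 1)} (l : List (HMd F n × ℕ)) :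
      TreeLike F (n + 1) t →
      (∀ p ∈ l, TreeLike F n p.1) →
      (∀ p ∈ l, FDisj t p.1) →
      l.Pairwise (fun p q => FDisj p.1 q.1) →
      TreeLike F (n + 2) (HMd.up (n + 1) t + HMd.rep 1 (HMd.ofList l))

/-- `x` is an ingredient of `t`, or `t` itself. -/
def IngrE {k n : ℕ} (x : HMd A k) (t : HMd A n) : Prop :=
  Ingr A x t ∨ hmEq x t

/-- `x` occurs (up to lifting) in the domain of `m`. -/
def MemUpTo {k n : ℕ} (x : HMd A k) (m : HMd A (n + 1)) : Prop :=
  ∃ y : HMd A n, HMd.Memb y m ∧ hmEq x y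

/-- `x` is the tree-like ingredient of `t` induced by (i.e. with root) `f`. -/
def RootedIngr {n : ℕ} (t : HMd F n) (f : F) {k : ℕ} (x : HMd F k) : Prop :=
  IngrE x t ∧ TreeLike F k x ∧ 0 < HMd.acount f x

/-- `p` is the parent of `f` in the tree-like multiset `t`: the induced multiset of `f`
lies in the domain of the multiset induced by `p`, directly or inside a group ingredient. -/
def IsParentIn {n : ℕ} (t : HMd F n) (f p : F) : Prop :=
  ∃ (kp : ℕ) (xp : HMd F (kp + 1)), RootedIngr t p xp ∧
    ∃ (kf : ℕ) (xf : HMd F kf), RootedIngr t f xf ∧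
      (MemUpTo xf xp ∨
        ∃ (kg : ℕ) (g : HMd F (kg + 1)), MemUpTo g xp ∧ HMd.NoAtoms g ∧ MemUpTo xf g)

/-- `f` occurs grouped in `t`: some group ingredient of `t` has a member with root `f`. -/
def InGroupOf {n : ℕ} (t : HMd F n) (f : F) : Prop :=
  ∃ (kg : ℕ) (g : HMd F (kg + 1)), Ingr F g t ∧ HMd.NoAtoms g ∧
    ∃ x : HMd F kg, HMd.Memb x g ∧ TreeLike F kg x ∧ 0 < HMd.acount f x

/-- Relaxation: set every multiplicity, at every nesting level, to 1. -/
def HMd.relax : ∀ {n : ℕ}, HMd A n → HMd A n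
  | 0, m => ((m : Multiset A).dedup : Multiset A)
  | n + 1, m =>
      (((m : Multiset (A ⊕ HMd A n)).map (Sum.map id (HMd.relax (n := n)))).dedup :
        Multiset (A ⊕ HMd A n))

/-- Renaming of urelements. -/
def HMd.mapA (g : A → B) : ∀ {n : ℕ}, HMd A n → HMd B n
  | 0, m => ((m : Multiset A).map g : Multiset B)
  | n + 1, m => ((m : Multiset (A ⊕ HMd A n)).map (Sum.map g (HMd.mapA g (n := n))) :
      Multiset (B ⊕ HMd B n))

/-- Cardinality-based feature diagrams over the feature universe `F`. -/
structure CFD (F : Type) where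
  feat : Finset F
  root : F
  root_mem : root ∈ feat
  parent : F → F
  parent_mem : ∀ f ∈ feat, f ≠ root → parent f ∈ feat
  reaches : ∀ f ∈ feat,
    Relation.ReflTransGen (fun a b => a ∈ feat ∧ a ≠ root ∧ parent a = b) f root
  groups : Finset (Finset F)
  groups_sub : ∀ G ∈ groups, ∀ f ∈ G, f ∈ feat ∧ f ≠ root
  groups_card : ∀ G ∈ groups, 1 < G.card
  groups_sib : ∀ G ∈ groups, ∀ f ∈ G, ∀ g ∈ G, parent f = parent g
  groups_disj : ∀ G ∈ groups, ∀ G' ∈ groups, G = G' ∨ Disjoint G G'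
  card : F → Set ℕ
  gcard : Finset F → Set ℕ
  card_ok : ∀ f ∈ feat, f ≠ root → (card f).Nonempty ∧ card f ≠ {0}
  gcard_ok : ∀ G ∈ groups,
    (gcard G).Finite ∧ (gcard G).Nonempty ∧ gcard G ≠ {0} ∧ ∀ c ∈ gcard G, c ≤ G.card
  parent_junk : ∀ f, ¬(f ∈ feat ∧ f ≠ root) → parent f = root
  card_junk : ∀ f, ¬(f ∈ feat ∧ f ≠ root) → card f = ∅
  gcard_junk : ∀ G, G ∉ groups → gcard G = ∅

variable {F : Type}

/-- The solitary (non-grouped) children of `f` in `D`. -/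
def solChildren (D : CFD F) (f : F) : Finset F :=
  D.feat.filter fun s => s ≠ D.root ∧ D.parent s = f ∧ ∀ G ∈ D.groups, s ∉ G

/-- The groups whose members are children of `f` in `D`. -/
def childGroups (D : CFD F) (f : F) : Finset (Finset F) :=
  D.groups.filter fun G => ∃ s ∈ G, D.parent s = f

/-- The hereditary multiset assembled from a choice of sub-products. -/
def prodMS (D : CFD F) (f : F) {n : ℕ} (hs : F → HMd F n) (hc : F → ℕ)
    (hg : Finset F → HMd F n) : HMd F (n + 1) :=
  ((({Sum.inl f} : Multiset (F ⊕ HMd F n))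
    + ((solChildren D f).val.map fun s =>
        Multiset.replicate (hc s) (Sum.inr (hs s) : F ⊕ HMd F n)).sum
    + ((childGroups D f).val.map fun G => (Sum.inr (hg G) : F ⊕ HMd F n)))
    : Multiset (F ⊕ HMd F n))

/-- The hereditary multiset assembled from a group selection. -/
def grpMS {n : ℕ} (sel : Finset F) (hs : F → HMd F n) (hc : F → ℕ) : HMd F (n + 1) :=
  ((sel.val.map fun s =>
      Multiset.replicate (hc s) (Sum.inr (hs s) : F ⊕ HMd F n)).sum :
    Multiset (F ⊕ HMd F n))

mutual
  /-- `HierProd D f m` : `m` is a hierarchical product of the subdiagram of `D` induced by `f`. -/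
  inductive HierProd {F : Type} (D : CFD F) : F → ∀ {n : ℕ}, HMd F n → Prop
    | mk {n : ℕ} (f : F) (hs : F → HMd F n) (hc : F → ℕ) (hg : Finset F → HMd F n)
        (hf : f ∈ D.feat)
        (hsol : ∀ s ∈ solChildren D f, HierProd D s (hs s))
        (hsolc : ∀ s ∈ solChildren D f, hc s ∈ D.card s)
        (hgrp : ∀ G ∈ childGroups D f, GroupProd D G (hg G)) :
        HierProd D f (prodMS D f hs hc hg)
  /-- `GroupProd D G m` : `m` is a hierarchical product associated with the group `G` of `D`. -/
  inductive GroupProd {F : Type} (D : CFD F) : Finset F → ∀ {n : ℕ}, HMd F n → Prop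
    | mk {n : ℕ} (G sel : Finset F) (hs : F → HMd F n) (hc : F → ℕ)
        (hsub : sel ⊆ G) (hG : G ∈ D.groups) (hcard : sel.card ∈ D.gcard G)
        (hmem : ∀ s ∈ sel, HierProd D s (hs s))
        (hmemc : ∀ s ∈ sel, hc s ∈ D.card s) :
        GroupProd D G (grpMS sel hs hc)
end

/-- The hierarchical theory of `D` (as a set of hereditary multisets at all levels). -/
def ProductsSet (D : CFD F) : Set (Σ n, HMd F n) := {m | HierProd D D.root m.2}

/-- A set of (tree-like) multisets is mergeable if a single CFD represents all of them. -/
def Mergeable (U : Set (Σ n, HMd F n)) : Prop :=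
  ∃ D : CFD F, ∀ m ∈ U, HierProd D D.root m.2

/-- A set is completely mergeable if it is exactly the hierarchical theory of some CFD. -/
def CompletelyMergeable (U : Set (Σ n, HMd F n)) : Prop :=
  ∃ D : CFD F, U = ProductsSet D

/-- Pointwise relaxation of a set of hereditary multisets. -/
def relaxSet (U : Set (Σ n, HMd F n)) : Set (Σ n, HMd F n) :=
  {x | ∃ m ∈ U, x = ⟨m.1, HMd.relax m.2⟩}

/-- The flat products of `D` (Definition of flat theory). -/
def FlatProd (D : CFD F) (m : Multiset F) : Prop :=
  (∀ f ∈ m, f ∈ D.feat) ∧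
  m.count D.root = 1 ∧
  (∀ f ∈ D.feat, f ≠ D.root → 0 < m.count f →
    ∃ c ∈ D.card f, m.count f = c * m.count (D.parent f)) ∧
  (∀ f ∈ D.feat, f ≠ D.root → (∀ G ∈ D.groups, f ∉ G) → 0 ∉ D.card f →
    0 < m.count (D.parent f) → 0 < m.count f) ∧
  (∀ G ∈ D.groups, ∀ g ∈ G, 0 < m.count (D.parent g) →
    (G.filter fun f => 0 < m.count f).card ∈ D.gcard G)

/-- Rooted (possibly countably infinite) trees with explicit parent function. -/
structure RTree (N : Type) where
  nodes : Set N
  countable : nodes.Countable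
  root : N
  root_mem : root ∈ nodes
  parent : N → N
  parent_mem : ∀ f ∈ nodes, f ≠ root → parent f ∈ nodes
  reaches : ∀ f ∈ nodes,
    Relation.ReflTransGen (fun a b => a ∈ nodes ∧ a ≠ root ∧ parent a = b) f root


/-! ### Auxiliary infrastructure for Statement 17 -/

section Aux

variable {F : Type}

/-- Membership in a sum of a mapped multiset of multisets. -/
lemma mem_map_sum {α β : Type*} (m : Multiset α) (f : α → Multiset β) (b : β) :
    b ∈ (m.map f).sum ↔ ∃ a ∈ m, b ∈ f a := by
  induction m using Multiset.induction_on with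
  | empty => simp
  | cons a s ih => simp [ih]

/-- Pushing a map through a sum of mapped multisets. -/
lemma map_map_sum {α β γ : Type*} (m : Multiset α) (f : α → Multiset β) (g : β → γ) :
    ((m.map f).sum).map g = (m.map (fun a => (f a).map g)).sum := by
  induction m using Multiset.induction_on with
  | empty => simp
  | cons a s ih => simp [ih]

lemma up_injective : ∀ n : ℕ, Function.Injective (HMd.up (A := F) n)
  | 0 => Multiset.map_injective Sum.inl_injective
  | n + 1 => Multiset.map_injective
      (Function.Injective.sumMap (fun _ _ h => h) (up_injective n))

lemma relax_nodup_succ (n : ℕ) (m : HMd F (n + 1)) :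
    Multiset.Nodup (HMd.relax m : Multiset (F ⊕ HMd F n)) := by
  simp [HMd.relax]

lemma relax_up : ∀ (n : ℕ) (m : HMd F n),
    HMd.relax (HMd.up n m) = HMd.up n (HMd.relax m)
  | 0, m => by
      apply (Multiset.Nodup.ext (relax_nodup_succ 0 _) ?_).mpr
      · intro a
        simp only [HMd.relax, HMd.up, Multiset.mem_dedup, Multiset.mem_map]
        constructor
        · rintro ⟨b, ⟨c, hc, rfl⟩, rfl⟩
          exact ⟨c, by simpa using hc, rfl⟩
        · rintro ⟨c, hc, rfl⟩
          exact ⟨Sum.inl c, ⟨c, by simpa using hc, rfl⟩, rfl⟩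
      · exact Multiset.Nodup.map Sum.inl_injective (Multiset.nodup_dedup m)
  | n + 1, m => by
      have key : ∀ b : F ⊕ HMd F n,
          Sum.map id (HMd.relax (n := n + 1)) (Sum.map id (HMd.up n) b)
          = Sum.map id (HMd.up n) (Sum.map id (HMd.relax (n := n)) b) := by
        intro b
        cases b with
        | inl a => rfl
        | inr x =>
            show Sum.inr (HMd.relax (HMd.up n x)) = Sum.inr (HMd.up n (HMd.relax x))
            rw [relax_up n x]
      apply (Multiset.Nodup.ext (relax_nodup_succ (n+1) _) ?_).mpr
      · intro a
        simp only [HMd.relax, HMd.up, Multiset.mem_dedup, Multiset.mem_map]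
        constructor
        · rintro ⟨b, ⟨c, hc, rfl⟩, rfl⟩
          exact ⟨Sum.map id (HMd.relax (n := n)) c, ⟨c, hc, rfl⟩, (key c).symm⟩
        · rintro ⟨b, ⟨c, hc, rfl⟩, rfl⟩
          exact ⟨Sum.map id (HMd.up n) c, ⟨c, hc, rfl⟩, key c⟩
      · exact Multiset.Nodup.map
          (Function.Injective.sumMap (fun _ _ h => h) (up_injective n))
          (Multiset.nodup_dedup _)

lemma liftLe_refl {n : ℕ} (h : n ≤ n) (x : HMd F n) : HMd.liftLe h x = x :=
  Nat.leRecOn_self x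

lemma liftLe_succ {k n : ℕ} (h1 : k ≤ n) (h2 : k ≤ n + 1) (x : HMd F k) :
    HMd.liftLe h2 x = HMd.up n (HMd.liftLe h1 x) :=
  Nat.leRecOn_succ h1 x

lemma liftLe_trans {k m n : ℕ} (h1 : k ≤ m) (h2 : m ≤ n) (x : HMd F k) :
    HMd.liftLe (h1.trans h2) x = HMd.liftLe h2 (HMd.liftLe h1 x) :=
  Nat.leRecOn_trans h1 h2 x

lemma relax_liftLe {k n : ℕ} (h : k ≤ n) (x : HMd F k) :
    HMd.relax (HMd.liftLe h x) = HMd.liftLe h (HMd.relax x) := by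
  induction n, h using Nat.le_induction with
  | base => rw [liftLe_refl, liftLe_refl]
  | succ n h ih =>
      rw [liftLe_succ h (h.trans n.le_succ), liftLe_succ h (h.trans n.le_succ),
        relax_up, ih]

lemma hmEq_liftLe {k n : ℕ} (h : k ≤ n) (x : HMd F k) :
    hmEq (HMd.liftLe h x) x := by
  show HMd.liftLe (le_max_left n k) (HMd.liftLe h x) = HMd.liftLe (le_max_right n k) x
  rw [← liftLe_trans h (le_max_left n k)]

lemma up_prodMS (D : CFD F) (f : F) {n : ℕ} (hs : F → HMd F n) (hc : F → ℕ)
    (hg : Finset F → HMd F n) :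
    HMd.up (n + 1) (prodMS D f hs hc hg)
      = prodMS D f (fun s => HMd.up n (hs s)) hc (fun G => HMd.up n (hg G)) := by
  simp only [prodMS, HMd.up, Multiset.map_add, Multiset.map_singleton, map_map_sum,
    Multiset.map_map, Multiset.map_replicate]
  rfl

lemma up_grpMS {n : ℕ} (sel : Finset F) (hs : F → HMd F n) (hc : F → ℕ) :
    HMd.up (n + 1) (grpMS sel hs hc)
      = grpMS sel (fun s => HMd.up n (hs s)) hc := by
  simp only [grpMS, HMd.up, map_map_sum, Multiset.map_map, Multiset.map_replicate]
  rfl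

lemma prodMS_congr (D : CFD F) (f : F) {n : ℕ} {hs hs' : F → HMd F n} {hc : F → ℕ}
    {hg hg' : Finset F → HMd F n}
    (h1 : ∀ s ∈ solChildren D f, hs s = hs' s)
    (h2 : ∀ G ∈ childGroups D f, hg G = hg' G) :
    prodMS D f hs hc hg = prodMS D f hs' hc hg' := by
  simp only [prodMS]
  congr 1
  · congr 1
    apply congrArg
    exact Multiset.map_congr rfl fun s hsmem => by rw [h1 s hsmem]
  · exact Multiset.map_congr rfl fun G hG => by rw [h2 G hG]

lemma grpMS_congr {n : ℕ} (sel : Finset F) {hs hs' : F → HMd F n} {hc : F → ℕ}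
    (h1 : ∀ s ∈ sel, hs s = hs' s) :
    grpMS sel hs hc = grpMS sel hs' hc := by
  simp only [grpMS]
  apply congrArg
  exact Multiset.map_congr rfl fun s hsmem => by rw [h1 s hsmem]

lemma liftLe_prodMS (D : CFD F) (f : F) {k n : ℕ} (h : k ≤ n) (hs : F → HMd F k)
    (hc : F → ℕ) (hg : Finset F → HMd F k) :
    HMd.liftLe (Nat.succ_le_succ h) (prodMS D f hs hc hg)
      = prodMS D f (fun s => HMd.liftLe h (hs s)) hc (fun G => HMd.liftLe h (hg G)) := by
  induction n, h using Nat.le_induction with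
  | base =>
      rw [liftLe_refl]
      exact prodMS_congr D f (fun s _ => (liftLe_refl _ _).symm)
        (fun G _ => (liftLe_refl _ _).symm)
  | succ n h ih =>
      rw [liftLe_succ (Nat.succ_le_succ h) _ _, ih, up_prodMS]
      exact prodMS_congr D f (fun s _ => (liftLe_succ h _ _).symm)
        (fun G _ => (liftLe_succ h _ _).symm)

lemma liftLe_grpMS {k n : ℕ} (h : k ≤ n) (sel : Finset F) (hs : F → HMd F k)
    (hc : F → ℕ) :
    HMd.liftLe (Nat.succ_le_succ h) (grpMS sel hs hc)
      = grpMS sel (fun s => HMd.liftLe h (hs s)) hc := by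
  induction n, h using Nat.le_induction with
  | base =>
      rw [liftLe_refl]
      exact grpMS_congr sel (fun s _ => (liftLe_refl _ _).symm)
  | succ n h ih =>
      rw [liftLe_succ (Nat.succ_le_succ h) _ _, ih, up_grpMS]
      exact grpMS_congr sel (fun s _ => (liftLe_succ h _ _).symm)

/-- Lifting preserves being a hierarchical/group product. -/
lemma up_closure (D : CFD F) : ∀ n : ℕ,
    (∀ (f : F) (m : HMd F n), HierProd D f m → HierProd D f (HMd.up n m)) ∧
    (∀ (G : Finset F) (m : HMd F n), GroupProd D G m → GroupProd D G (HMd.up n m)) := by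
  intro n
  induction n with
  | zero =>
      constructor
      · intro f m h; cases h
      · intro G m h; cases h
  | succ n ih =>
      constructor
      · intro f m h
        cases h with
        | mk f hs hc hg hf hsol hsolc hgrp =>
            rw [up_prodMS]
            exact HierProd.mk f _ hc _ hf
              (fun s hsm => ih.1 s (hs s) (hsol s hsm)) hsolc
              (fun G hG => ih.2 G (hg G) (hgrp G hG))
      · intro G m h
        cases h with
        | mk G sel hs hc hsub hG hcard hmem hmemc =>
            rw [up_grpMS]
            exact GroupProd.mk G sel _ hc hsub hG hcard
              (fun s hsm => ih.1 s (hs s) (hmem s hsm)) hmemc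

lemma liftLe_closure_prod (D : CFD F) {k n : ℕ} (h : k ≤ n) {f : F} {m : HMd F k}
    (hp : HierProd D f m) : HierProd D f (HMd.liftLe h m) := by
  induction n, h using Nat.le_induction with
  | base => rw [liftLe_refl]; exact hp
  | succ n h ih => rw [liftLe_succ h _ _]; exact (up_closure D n).1 f _ ih

lemma liftLe_closure_grp (D : CFD F) {k n : ℕ} (h : k ≤ n) {G : Finset F} {m : HMd F k}
    (hp : GroupProd D G m) : GroupProd D G (HMd.liftLe h m) := by
  induction n, h using Nat.le_induction with
  | base => rw [liftLe_refl]; exact hp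
  | succ n h ih => rw [liftLe_succ h _ _]; exact (up_closure D n).2 G _ ih

/-- Distance from `f` to the root along the parent function. -/
def dRoot (D : CFD F) (f : F) : ℕ :=
  if h : ∃ k, D.parent^[k] f = D.root then Nat.find h else 0

lemma dRoot_exists (D : CFD F) {f : F} (hf : f ∈ D.feat) :
    ∃ k, D.parent^[k] f = D.root := by
  have h := D.reaches f hf
  induction h using Relation.ReflTransGen.head_induction_on with
  | refl => exact ⟨0, rfl⟩
  | head hab htail ih =>
      obtain ⟨k, hk⟩ := ih (hab.2.2 ▸ D.parent_mem _ hab.1 hab.2.1)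
      exact ⟨k + 1, by rw [Function.iterate_succ_apply, hab.2.2]; exact hk⟩

lemma dRoot_spec (D : CFD F) {f : F} (hf : f ∈ D.feat) :
    D.parent^[dRoot D f] f = D.root ∧ ∀ j < dRoot D f, D.parent^[j] f ≠ D.root := by
  have h := dRoot_exists D hf
  rw [dRoot, dif_pos h]
  exact ⟨Nat.find_spec h, fun j hj => Nat.find_min h hj⟩

lemma dRoot_le (D : CFD F) {f : F} (hf : f ∈ D.feat) {k : ℕ}
    (hk : D.parent^[k] f = D.root) : dRoot D f ≤ k := by
  have h := dRoot_exists D hf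
  rw [dRoot, dif_pos h]
  exact Nat.find_le hk

lemma dRoot_child (D : CFD F) {s : F} (hs : s ∈ D.feat) (hsr : s ≠ D.root) :
    dRoot D s = dRoot D (D.parent s) + 1 := by
  have hp : D.parent s ∈ D.feat := D.parent_mem s hs hsr
  have hspec := dRoot_spec D hs
  have hpspec := dRoot_spec D hp
  have h1 : dRoot D s ≤ dRoot D (D.parent s) + 1 :=
    dRoot_le D hs (by rw [Function.iterate_succ_apply]; exact hpspec.1)
  have h2 : 1 ≤ dRoot D s := by
    rcases Nat.eq_zero_or_pos (dRoot D s) with h | h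
    · exact absurd (by simpa [h] using hspec.1) hsr
    · exact h
  have h3 : dRoot D (D.parent s) ≤ dRoot D s - 1 := by
    apply dRoot_le D hp
    have := hspec.1
    rw [show dRoot D s = (dRoot D s - 1) + 1 by omega, Function.iterate_succ_apply] at this
    exact this
  omega

lemma iterate_mem (D : CFD F) {f : F} (hf : f ∈ D.feat) :
    ∀ i, i ≤ dRoot D f → D.parent^[i] f ∈ D.feat := by
  intro i
  induction i with
  | zero => intro _; exact hf
  | succ i ih =>
      intro hi
      have h1 : D.parent^[i] f ∈ D.feat := ih (by omega)
      have h2 : D.parent^[i] f ≠ D.root := (dRoot_spec D hf).2 i (by omega)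
      rw [Function.iterate_succ_apply']
      exact D.parent_mem _ h1 h2

lemma dRoot_lt_card (D : CFD F) {f : F} (hf : f ∈ D.feat) :
    dRoot D f + 1 ≤ D.feat.card := by
  have key : Set.InjOn (fun i => D.parent^[i] f) ↑(Finset.range (dRoot D f + 1)) := by
    intro i hi j hj hij
    simp only [Finset.coe_range, Set.mem_Iio] at hi hj
    replace hij : D.parent^[i] f = D.parent^[j] f := hij
    by_contra hne
    wlog hlt : i < j generalizing i j
    · exact this hj hi hij.symm (Ne.symm hne) (by omega)
    have hroot := (dRoot_spec D hf).1
    have : D.parent^[dRoot D f - j + i] f = D.root := by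
      have : D.parent^[dRoot D f - j] (D.parent^[j] f) = D.root := by
        rw [← Function.iterate_add_apply]
        rw [show dRoot D f - j + j = dRoot D f by omega]
        exact hroot
      rw [← hij] at this
      rw [Function.iterate_add_apply]
      exact this
    exact (dRoot_spec D hf).2 _ (by omega) this
  calc dRoot D f + 1 = (Finset.range (dRoot D f + 1)).card := by rw [Finset.card_range]
    _ ≤ D.feat.card := Finset.card_le_card_of_injOn _
        (fun i hi => by
          simp only [Finset.coe_range, Set.mem_Iio, Finset.mem_range] at hi
          exact iterate_mem D hf i (by omega)) key

/-- A level bound for products of the feature `f`. -/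
def lvl (D : CFD F) (f : F) : ℕ := 2 * (D.feat.card - dRoot D f)

/-- A level bound for group products of the group `G`. -/
def glvl (D : CFD F) (G : Finset F) : ℕ := G.sup (lvl D) + 1

lemma lvl_pos (D : CFD F) {f : F} (hf : f ∈ D.feat) : 2 ≤ lvl D f := by
  have := dRoot_lt_card D hf
  simp only [lvl]
  omega

lemma lvl_child (D : CFD F) {s f : F} (hs : s ∈ D.feat) (hsr : s ≠ D.root)
    (hpar : D.parent s = f) : lvl D s + 2 = lvl D f := by
  have h1 : dRoot D s = dRoot D f + 1 := by rw [dRoot_child D hs hsr, hpar]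
  have h2 := dRoot_lt_card D hs
  simp only [lvl]
  omega

/-- A default hereditary multiset. -/
def zeroHMd : ∀ n : ℕ, HMd F n
  | 0 => (0 : Multiset F)
  | _ + 1 => (0 : Multiset _)

lemma solChildren_mem {D : CFD F} {f s : F} (h : s ∈ solChildren D f) :
    s ∈ D.feat ∧ s ≠ D.root ∧ D.parent s = f := by
  simp only [solChildren, Finset.mem_filter] at h
  exact ⟨h.1, h.2.1, h.2.2.1⟩

lemma childGroups_mem {D : CFD F} {f : F} {G : Finset F} (h : G ∈ childGroups D f) :
    G ∈ D.groups ∧ ∀ s ∈ G, s ∈ D.feat ∧ s ≠ D.root ∧ D.parent s = f := by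
  simp only [childGroups, Finset.mem_filter] at h
  obtain ⟨hG, s₀, hs₀, hpar⟩ := h
  refine ⟨hG, fun s hs => ?_⟩
  obtain ⟨hfeat, hroot⟩ := D.groups_sub G hG s hs
  exact ⟨hfeat, hroot, by rw [D.groups_sib G hG s hs s₀ hs₀, hpar]⟩

lemma glvl_childGroups {D : CFD F} {f : F} {G : Finset F} (hf : f ∈ D.feat)
    (h : G ∈ childGroups D f) : glvl D G + 1 ≤ lvl D f := by
  obtain ⟨hG, hmem⟩ := childGroups_mem h
  have hsup : G.sup (lvl D) ≤ lvl D f - 2 := by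
    apply Finset.sup_le
    intro s hs
    obtain ⟨h1, h2, h3⟩ := hmem s hs
    have := lvl_child D h1 h2 h3
    omega
  have := lvl_pos D hf
  simp only [glvl]
  omega

/-- Every hierarchical (resp. group) product is the lift of one living at level
at most `lvl D f` (resp. `glvl D G`). -/
lemma down_lemma (D : CFD F) : ∀ n : ℕ,
    (∀ (f : F) (m : HMd F n), HierProd D f m →
      ∃ (k : ℕ) (hk : k ≤ n) (m₀ : HMd F k), k ≤ lvl D f ∧ HierProd D f m₀ ∧
        m = HMd.liftLe hk m₀) ∧
    (∀ (G : Finset F) (m : HMd F n), GroupProd D G m →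
      ∃ (k : ℕ) (hk : k ≤ n) (m₀ : HMd F k), k ≤ glvl D G ∧ GroupProd D G m₀ ∧
        m = HMd.liftLe hk m₀) := by
  intro n
  induction n with
  | zero =>
      constructor
      · intro f m h; cases h
      · intro G m h; cases h
  | succ n ih =>
      constructor
      · intro f m h
        cases h with
        | mk f hs hc hg hf hsol hsolc hgrp =>
            by_cases hcase : n + 1 ≤ lvl D f
            · exact ⟨n + 1, le_refl _, _, hcase,
                HierProd.mk f hs hc hg hf hsol hsolc hgrp, (liftLe_refl _ _).symm⟩
            · push_neg at hcase
              have hL2 : 2 ≤ lvl D f := lvl_pos D hf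
              have hLn : lvl D f - 1 ≤ n := by omega
              -- solitary children
              have hchoice : ∀ s, s ∈ solChildren D f →
                  ∃ m₀ : HMd F (lvl D f - 1), HierProd D s m₀ ∧
                    hs s = HMd.liftLe hLn m₀ := by
                intro s hsm
                obtain ⟨k, hk, m₀, hbd, hprod, heq⟩ := ih.1 s (hs s) (hsol s hsm)
                obtain ⟨h1, h2, h3⟩ := solChildren_mem hsm
                have hlv := lvl_child D h1 h2 h3
                have hkL : k ≤ lvl D f - 1 := by omega
                refine ⟨HMd.liftLe hkL m₀, liftLe_closure_prod D hkL hprod, ?_⟩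
                calc hs s = HMd.liftLe hk m₀ := heq
                  _ = HMd.liftLe hLn (HMd.liftLe hkL m₀) := liftLe_trans hkL hLn m₀
              choose ms hms1 hms2 using hchoice
              -- child groups
              have hgchoice : ∀ G, G ∈ childGroups D f →
                  ∃ m₀ : HMd F (lvl D f - 1), GroupProd D G m₀ ∧
                    hg G = HMd.liftLe hLn m₀ := by
                intro G hGm
                obtain ⟨k, hk, m₀, hbd, hprod, heq⟩ := ih.2 G (hg G) (hgrp G hGm)
                have hlv := glvl_childGroups hf hGm
                have hkL : k ≤ lvl D f - 1 := by omega
                refine ⟨HMd.liftLe hkL m₀, liftLe_closure_grp D hkL hprod, ?_⟩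
                calc hg G = HMd.liftLe hk m₀ := heq
                  _ = HMd.liftLe hLn (HMd.liftLe hkL m₀) := liftLe_trans hkL hLn m₀
              choose mg hmg1 hmg2 using hgchoice
              set hs' : F → HMd F (lvl D f - 1) := fun s =>
                if h : s ∈ solChildren D f then ms s h else zeroHMd _ with hs'def
              set hg' : Finset F → HMd F (lvl D f - 1) := fun G =>
                if h : G ∈ childGroups D f then mg G h else zeroHMd _ with hg'def
              refine ⟨(lvl D f - 1) + 1, Nat.succ_le_succ hLn, prodMS D f hs' hc hg',
                by omega, ?_, ?_⟩
              · exact HierProd.mk f hs' hc hg' hf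
                  (fun s hsm => by rw [hs'def]; simp only [dif_pos hsm]; exact hms1 s hsm)
                  hsolc
                  (fun G hGm => by rw [hg'def]; simp only [dif_pos hGm]; exact hmg1 G hGm)
              · rw [liftLe_prodMS D f hLn hs' hc hg']
                refine prodMS_congr D f (fun s hsm => ?_) (fun G hGm => ?_)
                · rw [hms2 s hsm, hs'def]; simp only [dif_pos hsm]
                · rw [hmg2 G hGm, hg'def]; simp only [dif_pos hGm]
      · intro G m h
        cases h with
        | mk G sel hs hc hsub hG hcard hmem hmemc =>
            by_cases hcase : n + 1 ≤ glvl D G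
            · exact ⟨n + 1, le_refl _, _, hcase,
                GroupProd.mk G sel hs hc hsub hG hcard hmem hmemc,
                (liftLe_refl _ _).symm⟩
            · push_neg at hcase
              have hMn : G.sup (lvl D) ≤ n := by
                simp only [glvl] at hcase; omega
              have hchoice : ∀ s, s ∈ sel →
                  ∃ m₀ : HMd F (G.sup (lvl D)), HierProd D s m₀ ∧
                    hs s = HMd.liftLe hMn m₀ := by
                intro s hsm
                obtain ⟨k, hk, m₀, hbd, hprod, heq⟩ := ih.1 s (hs s) (hmem s hsm)
                have hkL : k ≤ G.sup (lvl D) :=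
                  le_trans hbd (Finset.le_sup (hsub hsm))
                refine ⟨HMd.liftLe hkL m₀, liftLe_closure_prod D hkL hprod, ?_⟩
                calc hs s = HMd.liftLe hk m₀ := heq
                  _ = HMd.liftLe hMn (HMd.liftLe hkL m₀) := liftLe_trans hkL hMn m₀
              choose ms hms1 hms2 using hchoice
              set hs' : F → HMd F (G.sup (lvl D)) := fun s =>
                if h : s ∈ sel then ms s h else zeroHMd _ with hs'def
              refine ⟨G.sup (lvl D) + 1, Nat.succ_le_succ hMn, grpMS sel hs' hc,
                le_refl _, ?_, ?_⟩
              · exact GroupProd.mk G sel hs' hc hsub hG hcard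
                  (fun s hsm => by rw [hs'def]; simp only [dif_pos hsm]; exact hms1 s hsm)
                  hmemc
              · rw [liftLe_grpMS hMn sel hs' hc]
                refine grpMS_congr sel (fun s hsm => ?_)
                rw [hms2 s hsm, hs'def]; simp only [dif_pos hsm]

lemma dRoot_root (D : CFD F) : dRoot D D.root = 0 := by
  have h : ∃ k, D.parent^[k] D.root = D.root := ⟨0, rfl⟩
  rw [dRoot, dif_pos h]
  exact Nat.eq_zero_of_le_zero (Nat.find_le rfl)

/-- Relaxations of all hierarchical and group products at level `k`. -/
def RelaxProds (D : CFD F) (k : ℕ) : Set (HMd F k) :=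
  {x | (∃ (f : F) (m : HMd F k), HierProd D f m ∧ HMd.relax m = x) ∨
       (∃ (G : Finset F) (m : HMd F k), GroupProd D G m ∧ HMd.relax m = x)}

lemma finite_nodup_bounded {α : Type*} {T : Set α} (hT : T.Finite) :
    {s : Multiset α | s.Nodup ∧ ∀ a ∈ s, a ∈ T}.Finite := by
  classical
  apply Set.Finite.of_finite_image (f := Multiset.toFinset)
  · apply Set.Finite.subset (hT.toFinset.powerset : Finset (Finset α)).finite_toSet
    rintro t ⟨s, ⟨hnd, hb⟩, rfl⟩
    simp only [Finset.coe_powerset, Set.mem_preimage, Set.mem_powerset_iff,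
      Finset.coe_subset, Finset.mem_coe]
    intro a ha
    rw [Set.Finite.mem_toFinset]
    exact hb a (Multiset.mem_toFinset.mp ha)
  · intro s hs t ht heq
    have hs' : s.toFinset.val = s := by
      rw [Multiset.toFinset_val, Multiset.Nodup.dedup hs.1]
    have ht' : t.toFinset.val = t := by
      rw [Multiset.toFinset_val, Multiset.Nodup.dedup ht.1]
    rw [← hs', ← ht', heq]

lemma relaxProds_zero (D : CFD F) : RelaxProds D 0 = ∅ := by
  ext x
  simp only [RelaxProds, Set.mem_setOf_eq, Set.mem_empty_iff_false, iff_false]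
  rintro (⟨f, m, hm, rfl⟩ | ⟨G, m, hm, rfl⟩) <;> cases hm

lemma relaxProds_succ_subset (D : CFD F) (k : ℕ) :
    RelaxProds D (k + 1) ⊆ {s : Multiset (F ⊕ HMd F k) | s.Nodup ∧
      ∀ a ∈ s, a ∈ (Sum.inl '' ↑D.feat ∪ Sum.inr '' RelaxProds D k)} := by
  have main : ∀ (m : HMd F (k + 1)),
      ((∃ f, HierProd D f m) ∨ (∃ G, GroupProd D G m)) →
      ∀ a, a ∈ (HMd.relax m : Multiset (F ⊕ HMd F k)) →
        a ∈ (Sum.inl '' ↑D.feat ∪ Sum.inr '' RelaxProds D k) := by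
    intro m hm a ha
    have ha' : ∃ b ∈ (m : Multiset (F ⊕ HMd F k)),
        Sum.map id (HMd.relax (n := k)) b = a := by
      simp only [HMd.relax, Multiset.mem_dedup, Multiset.mem_map] at ha
      exact ha
    obtain ⟨b, hb, rfl⟩ := ha'
    rcases hm with ⟨f, hm⟩ | ⟨G, hm⟩
    · cases hm with
      | mk f hs hc hg hf hsol hsolc hgrp =>
          simp only [prodMS, Multiset.mem_add, Multiset.mem_singleton,
            Multiset.mem_map, mem_map_sum, Finset.mem_val] at hb
          rcases hb with (rfl | ⟨s, hsm, hrep⟩) | ⟨G, hGm, rfl⟩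
          · exact Or.inl ⟨f, hf, rfl⟩
          · rw [Multiset.eq_of_mem_replicate hrep]
            exact Or.inr ⟨HMd.relax (hs s), Or.inl ⟨s, hs s, hsol s hsm, rfl⟩, rfl⟩
          · exact Or.inr ⟨HMd.relax (hg G), Or.inr ⟨G, hg G, hgrp G hGm, rfl⟩, rfl⟩
    · cases hm with
      | mk G sel hs hc hsub hG hcard hmem hmemc =>
          simp only [grpMS, mem_map_sum, Finset.mem_val] at hb
          obtain ⟨s, hsm, hrep⟩ := hb
          rw [Multiset.eq_of_mem_replicate hrep]
          exact Or.inr ⟨HMd.relax (hs s), Or.inl ⟨s, hs s, hmem s hsm, rfl⟩, rfl⟩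
  rintro x (⟨f, m, hm, rfl⟩ | ⟨G, m, hm, rfl⟩)
  · exact ⟨relax_nodup_succ k m, main m (Or.inl ⟨f, hm⟩)⟩
  · exact ⟨relax_nodup_succ k m, main m (Or.inr ⟨G, hm⟩)⟩

lemma relaxProds_finite (D : CFD F) : ∀ k, (RelaxProds D k).Finite := by
  intro k
  induction k with
  | zero => rw [relaxProds_zero]; exact Set.finite_empty
  | succ k ih =>
      exact Set.Finite.subset
        (finite_nodup_bounded ((D.feat.finite_toSet.image _).union (ih.image _)))
        (relaxProds_succ_subset D k)

end Aux

/-- if an enumerable set of tree-like multisets is mergeable, then its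
relaxed version is finite (up to the identification of a multiset with its lifts). -/
theorem mergeable_relax_finite (F : Type) (U : Set (Σ n, HMd F n))
    (hcnt : U.Countable) (hU : ∀ m ∈ U, TreeLike F m.1 m.2) (h : Mergeable U) :
    ∃ L : List (Σ n, HMd F n), ∀ x ∈ relaxSet U, ∃ y ∈ L, hmEq x.2 y.2 := by
  obtain ⟨D, hD⟩ := h
  have hfin : ∀ k, (RelaxProds D k).Finite := relaxProds_finite D
  have hTfin : (⋃ k ∈ Finset.range (2 * D.feat.card + 1),
      Sigma.mk k '' RelaxProds D k : Set (Σ n, HMd F n)).Finite :=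
    Set.Finite.biUnion (Finset.finite_toSet _) fun k _ => (hfin k).image _
  refine ⟨hTfin.toFinset.toList, ?_⟩
  intro x hx
  obtain ⟨m, hm, rfl⟩ := hx
  obtain ⟨k, hk, m₀, hbd, hprod, heq⟩ := (down_lemma D m.1).1 D.root m.2 (hD m hm)
  have hbd' : k ≤ 2 * D.feat.card := by
    simp only [lvl, dRoot_root D, Nat.sub_zero] at hbd
    exact hbd
  refine ⟨⟨k, HMd.relax m₀⟩, ?_, ?_⟩
  · rw [Finset.mem_toList, Set.Finite.mem_toFinset]
    exact Set.mem_biUnion (Finset.mem_coe.mpr (Finset.mem_range.mpr (by omega)))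
      ⟨HMd.relax m₀, Or.inl ⟨D.root, m₀, hprod, rfl⟩, rfl⟩
  · show hmEq (HMd.relax m.2) (HMd.relax m₀)
    rw [heq, relax_liftLe]
    exact hmEq_liftLe hk _

end
end CFDPaper
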